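/- Let p be a prime and let a_1, a_2, a_3 be integers with 1 ≤ a_1 ≤ a_2 ≤ a_3. If b is an integer with a_1 + a_2 ≤ b ≤ a_3, then the number h_b of subgroups of order p^b in ℤ/p^{a_1} × ℤ/p^{a_2} × ℤ/p^{a_3} satisfies h_b · (p-1)(p^2-1) = (a_1+1)·p^{a_1+a_2+3} + p^{a_1+a_2+2} - a_1·p^{a_1+a_2+1} - p^{2a_1+2} - p^{a_1+a_2+2} - p^{a_1+a_2+1} + 1. -/

import Mathlib

open AddSubgroup QuotientAddGroup

section Goursat
variable {A B : Type} [AddCommGroup A] [AddCommGroup B]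

def ggraph (C : AddSubgroup B) (K : AddSubgroup A) (φ : C →+ A ⧸ K) : AddSubgroup (A × B) where
  carrier := {x | ∃ h : x.2 ∈ C, (QuotientAddGroup.mk x.1 : A ⧸ K) = φ ⟨x.2, h⟩}
  zero_mem' := ⟨zero_mem _, by show (QuotientAddGroup.mk 0 : A ⧸ K) = φ 0; simp⟩
  add_mem' := by
    rintro ⟨a, b⟩ ⟨a', b'⟩ ⟨hb, ha⟩ ⟨hb', ha'⟩
    exact ⟨add_mem hb hb', by
      show (QuotientAddGroup.mk (a + a') : A ⧸ K) = φ (⟨b, hb⟩ + ⟨b', hb'⟩)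
      rw [map_add, ← ha, ← ha']; rfl⟩
  neg_mem' := by
    rintro ⟨a, b⟩ ⟨hb, ha⟩
    exact ⟨neg_mem hb, by
      show (QuotientAddGroup.mk (-a) : A ⧸ K) = φ (-⟨b, hb⟩)
      rw [map_neg, ← ha]; rfl⟩

lemma mem_ggraph {C : AddSubgroup B} {K : AddSubgroup A} {φ : C →+ A ⧸ K} {x : A × B} :
    x ∈ ggraph C K φ ↔ ∃ h : x.2 ∈ C, (QuotientAddGroup.mk x.1 : A ⧸ K) = φ ⟨x.2, h⟩ := Iff.rfl

lemma ggraph_map_snd (C : AddSubgroup B) (K : AddSubgroup A) (φ : C →+ A ⧸ K) :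
    (ggraph C K φ).map (AddMonoidHom.snd A B) = C := by
  ext b
  constructor
  · rintro ⟨⟨a, b'⟩, ⟨hb, -⟩, rfl⟩
    exact hb
  · intro hb
    obtain ⟨a, ha⟩ := QuotientAddGroup.mk_surjective (φ ⟨b, hb⟩)
    exact ⟨(a, b), ⟨hb, ha⟩, rfl⟩

lemma ggraph_comap_inl (C : AddSubgroup B) (K : AddSubgroup A) (φ : C →+ A ⧸ K) :
    (ggraph C K φ).comap (AddMonoidHom.inl A B) = K := by
  ext a
  constructor
  · rintro ⟨hb, ha⟩
    have h0 : (⟨((AddMonoidHom.inl A B) a).2, hb⟩ : C) = 0 := Subtype.ext rfl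
    rw [h0, map_zero] at ha
    exact (QuotientAddGroup.eq_zero_iff _).mp ha
  · intro ha
    exact ⟨zero_mem _, by
      show (QuotientAddGroup.mk a : A ⧸ K) = φ 0
      simp [(QuotientAddGroup.eq_zero_iff _).mpr ha]⟩

lemma ggraph_injective :
    Function.Injective
      (fun x : Σ CK : AddSubgroup B × AddSubgroup A, (CK.1 →+ A ⧸ CK.2) =>
        ggraph x.1.1 x.1.2 x.2) := by
  rintro ⟨⟨C, K⟩, φ⟩ ⟨⟨C', K'⟩, φ'⟩ h
  simp only at h
  obtain rfl : C = C' := by rw [← ggraph_map_snd C K φ, h, ggraph_map_snd]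
  obtain rfl : K = K' := by rw [← ggraph_comap_inl C K φ, h, ggraph_comap_inl]
  suffices hφ : φ = φ' by subst hφ; rfl
  ext c
  obtain ⟨a, ha⟩ := QuotientAddGroup.mk_surjective (φ c)
  have hmem : ((a, (c : B)) : A × B) ∈ ggraph C K φ := ⟨c.2, by simpa using ha⟩
  rw [h] at hmem
  obtain ⟨hb, ha'⟩ := hmem
  exact ha.symm.trans (ha'.trans (congrArg φ' (Subtype.ext rfl)))

/-- Surjectivity data: every subgroup of `A × B` is a `ggraph`. -/
lemma ggraph_surjective :
    Function.Surjective
      (fun x : Σ CK : AddSubgroup B × AddSubgroup A, (CK.1 →+ A ⧸ CK.2) =>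
        ggraph x.1.1 x.1.2 x.2) := by
  intro H
  set C : AddSubgroup B := H.map (AddMonoidHom.snd A B) with hC
  set K : AddSubgroup A := H.comap (AddMonoidHom.inl A B) with hK
  set π : H →+ C :=
    AddMonoidHom.codRestrict ((AddMonoidHom.snd A B).comp H.subtype) C
      (fun x => ⟨x.1, x.2, rfl⟩) with hπ
  have hπs : Function.Surjective π := by
    rintro ⟨b, x, hx, hxb⟩
    exact ⟨⟨x, hx⟩, Subtype.ext hxb⟩
  set α : H →+ A ⧸ K := (QuotientAddGroup.mk' K).comp ((AddMonoidHom.fst A B).comp H.subtype)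
    with hα
  have hker : π.ker ≤ α.ker := by
    rintro ⟨⟨a, b⟩, hab⟩ hx
    have hb : b = 0 := congrArg Subtype.val hx
    subst hb
    exact (QuotientAddGroup.eq_zero_iff _).mpr hab
  set e := QuotientAddGroup.quotientKerEquivOfSurjective π hπs with he
  set φ : C →+ A ⧸ K := (QuotientAddGroup.lift π.ker α hker).comp e.symm.toAddMonoidHom with hφ
  have key : ∀ x : H, φ (π x) = QuotientAddGroup.mk (x : A × B).1 := by
    intro x
    have h1 : e.symm (π x) = QuotientAddGroup.mk x := by
      apply e.injective
      simp only [AddEquiv.apply_symm_apply]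
      rfl
    simp only [hφ, AddMonoidHom.comp_apply, AddEquiv.coe_toAddMonoidHom, h1]
    rfl
  refine ⟨⟨(C, K), φ⟩, ?_⟩
  ext ⟨a, b⟩
  simp only [mem_ggraph]
  constructor
  · rintro ⟨hb, ha⟩
    obtain ⟨x, hx, hxb⟩ := hb
    have hπx : π ⟨x, hx⟩ = ⟨b, ⟨x, hx, hxb⟩⟩ := Subtype.ext hxb
    rw [← hπx, key ⟨x, hx⟩] at ha
    have hk : -x.1 + a ∈ K := QuotientAddGroup.eq.mp ha.symm
    have : ((a, b) : A × B) = (-x.1 + a, 0) + x := by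
      ext
      · simp
      · simpa using hxb.symm
    rw [this]
    exact add_mem hk hx
  · intro hx
    refine ⟨⟨(a, b), hx, rfl⟩, ?_⟩
    have := key ⟨(a, b), hx⟩
    rw [show π ⟨(a, b), hx⟩ = ⟨b, ⟨(a, b), hx, rfl⟩⟩ from Subtype.ext rfl] at this
    exact this.symm

/-- Goursat equivalence. -/
noncomputable def goursatEquiv :
    (Σ CK : AddSubgroup B × AddSubgroup A, (CK.1 →+ A ⧸ CK.2)) ≃ AddSubgroup (A × B) :=
  Equiv.ofBijective _ ⟨ggraph_injective, ggraph_surjective⟩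

lemma goursatEquiv_apply (x : Σ CK : AddSubgroup B × AddSubgroup A, (CK.1 →+ A ⧸ CK.2)) :
    goursatEquiv x = ggraph x.1.1 x.1.2 x.2 := rfl

/-- Projection from the graph to `C`. -/
def ggraphProj (C : AddSubgroup B) (K : AddSubgroup A) (φ : C →+ A ⧸ K) :
    (ggraph C K φ) →+ C :=
  AddMonoidHom.codRestrict ((AddMonoidHom.snd A B).comp (ggraph C K φ).subtype) C
    (fun x => x.2.1)

lemma ggraphProj_surjective (C : AddSubgroup B) (K : AddSubgroup A) (φ : C →+ A ⧸ K) :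
    Function.Surjective (ggraphProj C K φ) := by
  rintro c
  obtain ⟨a, ha⟩ := QuotientAddGroup.mk_surjective (φ c)
  exact ⟨⟨(a, c.1), ⟨c.2, by simpa using ha⟩⟩, rfl⟩

/-- The kernel of the projection is `K`. -/
def ggraphProjKerEquiv (C : AddSubgroup B) (K : AddSubgroup A) (φ : C →+ A ⧸ K) :
    (ggraphProj C K φ).ker ≃ K where
  toFun x := ⟨x.1.1.1, by
    have h0 : (x.1 : A × B).2 = 0 := congrArg Subtype.val x.2
    obtain ⟨hb, ha⟩ := x.1.2
    have : (⟨(x.1 : A × B).2, hb⟩ : C) = 0 := Subtype.ext h0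
    rw [this, map_zero] at ha
    exact (QuotientAddGroup.eq_zero_iff _).mp ha⟩
  invFun k := ⟨⟨((k : A), 0), ⟨zero_mem _, by
      show (QuotientAddGroup.mk (k : A) : A ⧸ K) = φ 0
      simp [(QuotientAddGroup.eq_zero_iff _).mpr k.2]⟩⟩,
    by ext; rfl⟩
  left_inv x := by
    ext
    · rfl
    · exact (congrArg Subtype.val x.2).symm
  right_inv k := rfl

lemma card_ggraph (C : AddSubgroup B) (K : AddSubgroup A) (φ : C →+ A ⧸ K) :
    Nat.card (ggraph C K φ) = Nat.card K * Nat.card C := by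
  rw [AddSubgroup.card_eq_card_quotient_mul_card_addSubgroup (ggraphProj C K φ).ker,
    Nat.card_congr (QuotientAddGroup.quotientKerEquivOfSurjective _
      (ggraphProj_surjective C K φ)).toEquiv,
    Nat.card_congr (ggraphProjKerEquiv C K φ), mul_comm]


end Goursat


section Cyclic

/-- Multiplication by `k` as an `AddMonoidHom`. -/
def nsmulHom (Q : Type) [AddCommGroup Q] (k : ℕ) : Q →+ Q :=
  AddMonoidHom.mk' (fun x => k • x) (fun a b => smul_add k a b)

/-- The `k`-torsion subgroup. -/
def torSub (Q : Type) [AddCommGroup Q] (k : ℕ) : AddSubgroup Q := (nsmulHom Q k).ker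

lemma mem_torSub {Q : Type} [AddCommGroup Q] {k : ℕ} {x : Q} :
    x ∈ torSub Q k ↔ k • x = 0 := Iff.rfl

lemma range_nsmulHom_zmod (m k : ℕ) [NeZero m] :
    (nsmulHom (ZMod m) k).range = AddSubgroup.zmultiples ((k : ℕ) : ZMod m) := by
  ext y
  simp only [AddMonoidHom.mem_range, AddSubgroup.mem_zmultiples_iff]
  constructor
  · rintro ⟨x, rfl⟩
    refine ⟨(x.val : ℤ), ?_⟩
    show (x.val : ℤ) • ((k : ℕ) : ZMod m) = nsmulHom (ZMod m) k x
    show (x.val : ℤ) • ((k : ℕ) : ZMod m) = k • x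
    rw [natCast_zsmul, nsmul_eq_mul, nsmul_eq_mul, ZMod.natCast_val, ZMod.cast_id]
    ring
  · rintro ⟨j, rfl⟩
    refine ⟨((j : ℤ) : ZMod m), ?_⟩
    show k • ((j : ℤ) : ZMod m) = j • ((k : ℕ) : ZMod m)
    rw [nsmul_eq_mul, zsmul_eq_mul]
    push_cast
    ring

lemma card_torSub_zmod (m k : ℕ) [NeZero m] :
    Nat.card (torSub (ZMod m) k) = Nat.gcd m k := by
  have hm : m ≠ 0 := NeZero.ne m
  have hcard : Nat.card (ZMod m) = m := Nat.card_zmod m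
  have h1 : Nat.card (ZMod m) =
      Nat.card (ZMod m ⧸ (nsmulHom (ZMod m) k).ker) * Nat.card (torSub (ZMod m) k) :=
    AddSubgroup.card_eq_card_quotient_mul_card_addSubgroup _
  have h2 : Nat.card (ZMod m ⧸ (nsmulHom (ZMod m) k).ker) = m / Nat.gcd m k := by
    rw [Nat.card_congr (QuotientAddGroup.quotientKerEquivRange (nsmulHom (ZMod m) k)).toEquiv,
      range_nsmulHom_zmod, Nat.card_zmultiples, ZMod.addOrderOf_coe _ hm]
  rw [hcard, h2] at h1
  have hg : Nat.gcd m k ∣ m := Nat.gcd_dvd_left m k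
  have hq : m / Nat.gcd m k ≠ 0 := by
    have : 0 < m / Nat.gcd m k := Nat.div_pos (Nat.le_of_dvd (Nat.pos_of_ne_zero hm) hg)
      (Nat.pos_of_ne_zero (fun h => hm (Nat.eq_zero_of_gcd_eq_zero_left h)))
    omega
  have : m / Nat.gcd m k * Nat.gcd m k = m := Nat.div_mul_cancel hg
  exact Nat.eq_of_mul_eq_mul_left (Nat.pos_of_ne_zero hq) (by omega)

/-- Torsion subtype cardinality in a finite cyclic group. -/
lemma card_torSub_cyclic (Q : Type) [AddCommGroup Q] [Finite Q] [IsAddCyclic Q] (k : ℕ) :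
    Nat.card (torSub Q k) = Nat.gcd (Nat.card Q) k := by
  haveI : NeZero (Nat.card Q) := ⟨Nat.card_ne_zero.mpr ⟨⟨0⟩, inferInstance⟩⟩
  have e : ZMod (Nat.card Q) ≃+ Q := zmodAddCyclicAddEquiv inferInstance
  have : (torSub Q k) ≃ (torSub (ZMod (Nat.card Q)) k) := by
    refine ⟨fun x => ⟨e.symm x.1, ?_⟩, fun x => ⟨e x.1, ?_⟩, ?_, ?_⟩
    · have := x.2
      rw [mem_torSub] at this ⊢
      rw [← map_nsmul, this, map_zero]
    · have := x.2
      rw [mem_torSub] at this ⊢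
      rw [← map_nsmul, this, map_zero]
    · intro x; ext; simp
    · intro x; ext; simp
  rw [Nat.card_congr this, card_torSub_zmod]

/-- Counting homomorphisms from a finite cyclic group via torsion. -/
lemma card_addMonoidHom_eq_card_torSub (M Q : Type) [AddCommGroup M] [AddCommGroup Q]
    [Finite M] [IsAddCyclic M] :
    Nat.card (M →+ Q) = Nat.card (torSub Q (Nat.card M)) := by
  haveI : NeZero (Nat.card M) := ⟨Nat.card_ne_zero.mpr ⟨⟨0⟩, inferInstance⟩⟩
  set n := Nat.card M with hn
  have eM : ZMod n ≃+ M := zmodAddCyclicAddEquiv inferInstance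
  have e1 : (M →+ Q) ≃ (ZMod n →+ Q) :=
    ⟨fun f => f.comp eM.toAddMonoidHom, fun g => g.comp eM.symm.toAddMonoidHom,
     fun f => by ext x; simp, fun g => by ext x; simp⟩
  have eA : {f : ℤ →+ Q // f ↑n = 0} ≃ {q : Q // n • q = 0} :=
    Equiv.subtypeEquiv (q := fun q => n • q = 0) (zmultiplesHom Q).symm (fun f => by
      have h1 : ((zmultiplesHom Q).symm f) = f 1 := rfl
      have h2 : f ↑n = n • f 1 := by
        rw [← natCast_zsmul, ← map_zsmul]
        norm_num
      rw [h1, h2])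
  have eB : {q : Q // n • q = 0} ≃ torSub Q n := Equiv.subtypeEquivRight (fun q => mem_torSub.symm)
  have e2 : (ZMod n →+ Q) ≃ torSub Q n := (ZMod.lift n).symm.trans (eA.trans eB)
  rw [Nat.card_congr (e1.trans e2)]

/-- Number of homomorphisms between finite cyclic groups. -/
lemma card_addMonoidHom_cyclic (M Q : Type) [AddCommGroup M] [AddCommGroup Q]
    [Finite M] [Finite Q] [IsAddCyclic M] [IsAddCyclic Q] :
    Nat.card (M →+ Q) = Nat.gcd (Nat.card Q) (Nat.card M) := by
  rw [card_addMonoidHom_eq_card_torSub, card_torSub_cyclic]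

/-- If the cardinality of `Q` divides that of the cyclic group `M`, every element of `Q` is
a value of a homomorphism. -/
lemma card_addMonoidHom_dvd (M Q : Type) [AddCommGroup M] [AddCommGroup Q]
    [Finite M] [Finite Q] [IsAddCyclic M] (h : Nat.card Q ∣ Nat.card M) :
    Nat.card (M →+ Q) = Nat.card Q := by
  rw [card_addMonoidHom_eq_card_torSub]
  have htop : torSub Q (Nat.card M) = ⊤ := by
    ext q
    simp only [AddSubgroup.mem_top, iff_true, mem_torSub]
    obtain ⟨t, ht⟩ := h
    rw [ht, mul_comm, mul_smul]
    rw [card_nsmul_eq_zero', smul_zero]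
  rw [htop, AddSubgroup.card_top]

end Cyclic

section Classify
variable {p : ℕ} (hp : p.Prime)
include hp

lemma card_torSub_zmod_pow (m k : ℕ) (hk : k ≤ m) :
    Nat.card (torSub (ZMod (p ^ m)) (p ^ k)) = p ^ k := by
  haveI : NeZero (p ^ m) := ⟨pow_ne_zero _ hp.pos.ne'⟩
  rw [card_torSub_cyclic, Nat.card_zmod, Nat.gcd_eq_right (pow_dvd_pow p hk)]

lemma exists_torSub_eq (m : ℕ) (H : AddSubgroup (ZMod (p ^ m))) :
    ∃ k ≤ m, H = torSub (ZMod (p ^ m)) (p ^ k) := by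
  haveI : NeZero (p ^ m) := ⟨pow_ne_zero _ hp.pos.ne'⟩
  have hdvd : Nat.card H ∣ p ^ m := by
    have := AddSubgroup.card_addSubgroup_dvd_card H
    rwa [Nat.card_zmod] at this
  obtain ⟨k, hk, hcard⟩ := (Nat.dvd_prime_pow hp).mp hdvd
  refine ⟨k, hk, ?_⟩
  have hle : H ≤ torSub (ZMod (p ^ m)) (p ^ k) := by
    intro x hx
    rw [mem_torSub]
    have : (Nat.card H) • (⟨x, hx⟩ : H) = 0 := card_nsmul_eq_zero'
    have h2 := congrArg (AddSubgroup.subtype H) this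
    rw [map_nsmul, map_zero] at h2
    rw [← hcard]
    exact h2
  exact AddSubgroup.eq_of_le_of_card_ge hle
    (le_of_eq (by rw [card_torSub_zmod_pow hp m k hk, hcard]))

/-- Subgroups of `ZMod (p ^ m)` are indexed by `Fin (m + 1)`. -/
noncomputable def zmodSubgroupEquiv (m : ℕ) :
    Fin (m + 1) ≃ AddSubgroup (ZMod (p ^ m)) := by
  haveI : NeZero (p ^ m) := ⟨pow_ne_zero _ hp.pos.ne'⟩
  refine Equiv.ofBijective (fun k => torSub (ZMod (p ^ m)) (p ^ (k : ℕ))) ⟨?_, ?_⟩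
  · intro k l h
    have hk := card_torSub_zmod_pow hp m k (Nat.lt_succ_iff.mp k.2)
    have hl := card_torSub_zmod_pow hp m l (Nat.lt_succ_iff.mp l.2)
    simp only at h
    rw [h, hl] at hk
    exact Fin.ext (Nat.pow_right_injective hp.two_le hk.symm)
  · intro H
    obtain ⟨k, hk, hH⟩ := exists_torSub_eq hp m H
    exact ⟨⟨k, Nat.lt_succ_of_le hk⟩, hH.symm⟩

lemma zmodSubgroupEquiv_card (m : ℕ) (k : Fin (m + 1)) :
    Nat.card (zmodSubgroupEquiv hp m k) = p ^ (k : ℕ) := by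
  haveI : NeZero (p ^ m) := ⟨pow_ne_zero _ hp.pos.ne'⟩
  exact card_torSub_zmod_pow hp m k (Nat.lt_succ_iff.mp k.2)

omit hp in
-- quotient is cyclic, with card
instance quot_cyclic {n : ℕ} (K : AddSubgroup (ZMod n)) : IsAddCyclic (ZMod n ⧸ K) :=
  isAddCyclic_of_surjective (QuotientAddGroup.mk' K) (QuotientAddGroup.mk'_surjective K)

omit hp in
lemma card_quot_mul (n : ℕ) [NeZero n] (K : AddSubgroup (ZMod n)) :
    Nat.card (ZMod n ⧸ K) * Nat.card K = n := by
  conv_rhs => rw [← Nat.card_zmod n]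
  exact (AddSubgroup.card_eq_card_quotient_mul_card_addSubgroup K).symm
end Classify


lemma nat_card_sigma {κ : Type} [Fintype κ] (g : κ → Type) [∀ i, Finite (g i)] :
    Nat.card (Σ i, g i) = ∑ i, Nat.card (g i) := by
  classical
  haveI : ∀ i, Fintype (g i) := fun i => Fintype.ofFinite _
  simp_rw [Nat.card_eq_fintype_card]
  exact Fintype.card_sigma

lemma card_subtype_sigma_fst {ι : Type} [Fintype ι] (f : ι → Type) [∀ i, Finite (f i)]
    (P : ι → Prop) [DecidablePred P] :
    Nat.card {x : Σ i, f i // P x.1} = ∑ i : ι, if P i then Nat.card (f i) else 0 := by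
  classical
  have e : {x : Σ i, f i // P x.1} ≃ Σ i : {i // P i}, f i.1 :=
    ⟨fun x => ⟨⟨x.1.1, x.2⟩, x.1.2⟩, fun y => ⟨⟨y.1.1, y.2⟩, y.1.2⟩,
     fun x => rfl, fun y => rfl⟩
  rw [Nat.card_congr e, nat_card_sigma]
  rw [← Finset.sum_filter]
  exact (Finset.sum_subtype (Finset.univ.filter P)
    (fun x => by simp) (fun i => Nat.card (f i))).symm

/-- Transport subgroups along an `AddEquiv`. -/
def addSubgroupCongr {G G' : Type} [AddGroup G] [AddGroup G'] (e : G ≃+ G') :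
    AddSubgroup G ≃ AddSubgroup G' where
  toFun H := H.map e.toAddMonoidHom
  invFun H' := H'.map e.symm.toAddMonoidHom
  left_inv H := by
    ext x
    simp only [AddSubgroup.mem_map, AddMonoidHom.coe_coe]
    constructor
    · rintro ⟨y, ⟨z, hz, rfl⟩, rfl⟩
      simpa using hz
    · intro hx
      exact ⟨e x, ⟨x, hx, rfl⟩, by simp⟩
  right_inv H' := by
    ext x
    simp only [AddSubgroup.mem_map, AddMonoidHom.coe_coe]
    constructor
    · rintro ⟨y, ⟨z, hz, rfl⟩, rfl⟩
      simpa using hz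
    · intro hx
      exact ⟨e.symm x, ⟨x, hx, rfl⟩, by simp⟩

lemma card_addSubgroupCongr {G G' : Type} [AddGroup G] [AddGroup G'] (e : G ≃+ G')
    (H : AddSubgroup G) : Nat.card (addSubgroupCongr e H) = Nat.card H :=
  (Nat.card_congr (e.addSubgroupMap H).toEquiv).symm

lemma card_subgroup_subtype_congr {G G' : Type} [AddGroup G] [AddGroup G'] (e : G ≃+ G')
    (n : ℕ) : Nat.card {H : AddSubgroup G // Nat.card H = n} =
      Nat.card {H : AddSubgroup G' // Nat.card H = n} :=
  Nat.card_congr (Equiv.subtypeEquiv (addSubgroupCongr e)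
    (fun H => by rw [card_addSubgroupCongr]))

lemma gcd_pow_pow (p u v : ℕ) (hp : 1 ≤ p) : Nat.gcd (p ^ u) (p ^ v) = p ^ min u v := by
  rcases le_total u v with h | h
  · rw [Nat.gcd_eq_left (pow_dvd_pow p h), min_eq_left h]
  · rw [Nat.gcd_eq_right (pow_dvd_pow p h), min_eq_right h]

section Main
open Finset
variable {p : ℕ} (hp : p.Prime)
include hp

lemma main1 (a₁ a₂ a₃ b : ℕ)
    [Fintype (AddSubgroup (ZMod (p^a₁) × ZMod (p^a₂)))]
    (hb1 : a₁ + a₂ ≤ b) (hb2 : b ≤ a₃) :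
    Nat.card {H : AddSubgroup ((ZMod (p^a₁) × ZMod (p^a₂)) × ZMod (p^a₃)) //
        Nat.card H = p ^ b}
      = ∑ K : AddSubgroup (ZMod (p^a₁) × ZMod (p^a₂)),
          Nat.card ((ZMod (p^a₁) × ZMod (p^a₂)) ⧸ K) := by
  classical
  haveI : NeZero (p ^ a₁) := ⟨pow_ne_zero _ hp.pos.ne'⟩
  haveI : NeZero (p ^ a₂) := ⟨pow_ne_zero _ hp.pos.ne'⟩
  haveI : NeZero (p ^ a₃) := ⟨pow_ne_zero _ hp.pos.ne'⟩
  haveI : ∀ CK : AddSubgroup (ZMod (p^a₃)) × AddSubgroup (ZMod (p^a₁) × ZMod (p^a₂)),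
      Finite (CK.1 →+ (ZMod (p^a₁) × ZMod (p^a₂)) ⧸ CK.2) := fun CK =>
    Finite.of_injective (fun f => (f : CK.1 → (ZMod (p^a₁) × ZMod (p^a₂)) ⧸ CK.2))
      DFunLike.coe_injective
  haveI : Fintype (AddSubgroup (ZMod (p^a₃))) := Fintype.ofFinite _
  have hcardA : Nat.card (ZMod (p^a₁) × ZMod (p^a₂)) = p ^ (a₁ + a₂) := by
    rw [Nat.card_prod, Nat.card_zmod, Nat.card_zmod, pow_add]
  -- Step 1: Goursat
  have step1 : Nat.card {H : AddSubgroup ((ZMod (p^a₁) × ZMod (p^a₂)) × ZMod (p^a₃)) //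
        Nat.card H = p ^ b}
      = Nat.card {x : Σ CK : AddSubgroup (ZMod (p^a₃)) ×
            AddSubgroup (ZMod (p^a₁) × ZMod (p^a₂)), (CK.1 →+ (ZMod (p^a₁) × ZMod (p^a₂)) ⧸ CK.2) //
          Nat.card x.1.2 * Nat.card x.1.1 = p ^ b} :=
    (Nat.card_congr (Equiv.subtypeEquiv goursatEquiv (fun x => by
      rw [goursatEquiv_apply, card_ggraph]))).symm
  rw [step1, card_subtype_sigma_fst
    (fun CK : AddSubgroup (ZMod (p^a₃)) × AddSubgroup (ZMod (p^a₁) × ZMod (p^a₂)) =>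
      (CK.1 →+ (ZMod (p^a₁) × ZMod (p^a₂)) ⧸ CK.2))
    (fun CK => Nat.card CK.2 * Nat.card CK.1 = p ^ b)]
  rw [Fintype.sum_prod_type, Finset.sum_comm]
  refine Finset.sum_congr rfl (fun K _ => ?_)
  -- inner sum over C
  obtain ⟨s, hs, hK⟩ := (Nat.dvd_prime_pow hp).mp
    (hcardA ▸ AddSubgroup.card_addSubgroup_dvd_card K)
  have hsb : s ≤ b := le_trans hs hb1
  set k₀ : Fin (a₃ + 1) := ⟨b - s, by omega⟩ with hk₀
  have hk0v : (k₀ : ℕ) = b - s := rfl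
  rw [← Equiv.sum_comp (zmodSubgroupEquiv hp a₃)
    (fun C => if Nat.card K * Nat.card C = p ^ b
      then Nat.card (C →+ (ZMod (p^a₁) × ZMod (p^a₂)) ⧸ K) else 0)]
  have hcond : ∀ k : Fin (a₃ + 1),
      (Nat.card K * Nat.card (zmodSubgroupEquiv hp a₃ k) = p ^ b) ↔ k = k₀ := by
    intro k
    rw [hK, zmodSubgroupEquiv_card hp a₃ k, ← pow_add]
    constructor
    · intro h
      have := Nat.pow_right_injective hp.two_le h
      exact Fin.ext (by omega)
    · rintro rfl
      congr 1
      omega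
  calc (∑ k : Fin (a₃ + 1), if Nat.card K * Nat.card (zmodSubgroupEquiv hp a₃ k) = p ^ b
          then Nat.card ((zmodSubgroupEquiv hp a₃ k) →+ (ZMod (p^a₁) × ZMod (p^a₂)) ⧸ K) else 0)
      = ∑ k : Fin (a₃ + 1), if k = k₀
          then Nat.card ((zmodSubgroupEquiv hp a₃ k) →+ (ZMod (p^a₁) × ZMod (p^a₂)) ⧸ K) else 0 :=
        Finset.sum_congr rfl (fun k _ => if_congr (hcond k) rfl rfl)
    _ = Nat.card ((zmodSubgroupEquiv hp a₃ k₀) →+ (ZMod (p^a₁) × ZMod (p^a₂)) ⧸ K) := by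
        rw [Finset.sum_ite_eq' Finset.univ k₀]
        simp
    _ = Nat.card ((ZMod (p^a₁) × ZMod (p^a₂)) ⧸ K) := by
        apply card_addMonoidHom_dvd
        rw [zmodSubgroupEquiv_card hp a₃ k₀]
        have hq : Nat.card ((ZMod (p^a₁) × ZMod (p^a₂)) ⧸ K) * p ^ s = p ^ (a₁ + a₂) := by
          rw [← hK, ← hcardA]
          exact (AddSubgroup.card_eq_card_quotient_mul_card_addSubgroup K).symm
        have hq2 : Nat.card ((ZMod (p^a₁) × ZMod (p^a₂)) ⧸ K) = p ^ (a₁ + a₂ - s) := by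
          have : p ^ (a₁ + a₂ - s) * p ^ s = p ^ (a₁ + a₂) := by
            rw [← pow_add]; congr 1; omega
          exact Nat.eq_of_mul_eq_mul_right (pow_pos hp.pos s) (by rw [hq, this])
        rw [hq2]
        show p ^ (a₁ + a₂ - s) ∣ p ^ ((k₀ : ℕ))
        apply pow_dvd_pow
        omega

lemma pow_cancel_right {x v w : ℕ} (h : x * p ^ v = p ^ w) (hv : v ≤ w) :
    x = p ^ (w - v) := by
  have h2 : p ^ (w - v) * p ^ v = p ^ w := by rw [← pow_add]; congr 1; omega
  exact Nat.eq_of_mul_eq_mul_right (pow_pos hp.pos v) (by rw [h, h2])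

lemma card_quot_of_card (m k : ℕ) (K : AddSubgroup (ZMod (p^m))) (hk : k ≤ m)
    (h : Nat.card K = p^k) : Nat.card (ZMod (p^m) ⧸ K) = p ^ (m - k) := by
  haveI : NeZero (p ^ m) := ⟨pow_ne_zero _ hp.pos.ne'⟩
  refine pow_cancel_right hp ?_ hk
  rw [← h]
  exact card_quot_mul (p^m) K

lemma main2 (a₁ a₂ : ℕ) [Fintype (AddSubgroup (ZMod (p^a₁) × ZMod (p^a₂)))] :
    ∑ K : AddSubgroup (ZMod (p^a₁) × ZMod (p^a₂)),
        Nat.card ((ZMod (p^a₁) × ZMod (p^a₂)) ⧸ K)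
      = ∑ t : Fin (a₂ + 1), ∑ s : Fin (a₁ + 1),
          p ^ (min (a₁ - (s : ℕ)) (t : ℕ) + (a₁ + a₂ - (s : ℕ) - (t : ℕ))) := by
  classical
  haveI : NeZero (p ^ a₁) := ⟨pow_ne_zero _ hp.pos.ne'⟩
  haveI : NeZero (p ^ a₂) := ⟨pow_ne_zero _ hp.pos.ne'⟩
  haveI : ∀ CK : AddSubgroup (ZMod (p^a₂)) × AddSubgroup (ZMod (p^a₁)),
      Finite (CK.1 →+ ZMod (p^a₁) ⧸ CK.2) := fun CK =>
    Finite.of_injective (fun f => (f : CK.1 → ZMod (p^a₁) ⧸ CK.2)) DFunLike.coe_injective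
  haveI : ∀ CK : AddSubgroup (ZMod (p^a₂)) × AddSubgroup (ZMod (p^a₁)),
      Fintype (CK.1 →+ ZMod (p^a₁) ⧸ CK.2) := fun CK => Fintype.ofFinite _
  haveI : ∀ (C : AddSubgroup (ZMod (p^a₂))) (K : AddSubgroup (ZMod (p^a₁))),
      Fintype (C →+ ZMod (p^a₁) ⧸ K) := fun C K =>
    @Fintype.ofFinite _ (Finite.of_injective
      (fun f : C →+ ZMod (p^a₁) ⧸ K => (f : C → ZMod (p^a₁) ⧸ K)) DFunLike.coe_injective)
  haveI : Fintype (AddSubgroup (ZMod (p^a₁))) := Fintype.ofFinite _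
  haveI : Fintype (AddSubgroup (ZMod (p^a₂))) := Fintype.ofFinite _
  have hcardA : Nat.card (ZMod (p^a₁) × ZMod (p^a₂)) = p ^ (a₁ + a₂) := by
    rw [Nat.card_prod, Nat.card_zmod, Nat.card_zmod, pow_add]
  rw [← Equiv.sum_comp goursatEquiv
    (fun K : AddSubgroup (ZMod (p^a₁) × ZMod (p^a₂)) =>
      Nat.card ((ZMod (p^a₁) × ZMod (p^a₂)) ⧸ K))]
  rw [← Finset.univ_sigma_univ, Finset.sum_sigma]
  rw [Fintype.sum_prod_type]
  rw [← Equiv.sum_comp (zmodSubgroupEquiv hp a₂)]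
  refine Finset.sum_congr rfl (fun t _ => ?_)
  have ht : (t : ℕ) ≤ a₂ := Nat.lt_succ_iff.mp t.2
  rw [← Equiv.sum_comp (zmodSubgroupEquiv hp a₁)]
  refine Finset.sum_congr rfl (fun s _ => ?_)
  have hs : (s : ℕ) ≤ a₁ := Nat.lt_succ_iff.mp s.2
  have hCt : Nat.card (zmodSubgroupEquiv hp a₂ t) = p ^ (t : ℕ) :=
    zmodSubgroupEquiv_card hp a₂ _
  have hKs : Nat.card (zmodSubgroupEquiv hp a₁ s) = p ^ (s : ℕ) :=
    zmodSubgroupEquiv_card hp a₁ _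
  have hquot : Nat.card (ZMod (p^a₁) ⧸ (zmodSubgroupEquiv hp a₁ s : AddSubgroup (ZMod (p^a₁))))
      = p ^ (a₁ - (s : ℕ)) :=
    card_quot_of_card hp a₁ s _ hs hKs
  have hhom : Nat.card ((zmodSubgroupEquiv hp a₂ t : AddSubgroup (ZMod (p^a₂))) →+
      ZMod (p^a₁) ⧸ (zmodSubgroupEquiv hp a₁ s : AddSubgroup (ZMod (p^a₁))))
      = p ^ (min (a₁ - (s : ℕ)) (t : ℕ)) := by
    rw [card_addMonoidHom_cyclic, hquot, hCt, gcd_pow_pow _ _ _ hp.one_le]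
  have hgq : ∀ φ : (zmodSubgroupEquiv hp a₂ t : AddSubgroup (ZMod (p^a₂))) →+
      ZMod (p^a₁) ⧸ (zmodSubgroupEquiv hp a₁ s : AddSubgroup (ZMod (p^a₁))),
      Nat.card ((ZMod (p^a₁) × ZMod (p^a₂)) ⧸
        ggraph (zmodSubgroupEquiv hp a₂ t) (zmodSubgroupEquiv hp a₁ s) φ)
        = p ^ (a₁ + a₂ - (s : ℕ) - (t : ℕ)) := by
    intro φ
    have h1 : Nat.card ((ZMod (p^a₁) × ZMod (p^a₂)) ⧸
        ggraph (zmodSubgroupEquiv hp a₂ t) (zmodSubgroupEquiv hp a₁ s) φ)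
        * p ^ ((s : ℕ) + (t : ℕ)) = p ^ (a₁ + a₂) := by
      rw [← hcardA, pow_add, ← hKs, ← hCt,
        ← card_ggraph (zmodSubgroupEquiv hp a₂ t) (zmodSubgroupEquiv hp a₁ s) φ]
      exact (AddSubgroup.card_eq_card_quotient_mul_card_addSubgroup _).symm
    have h2 := pow_cancel_right hp h1 (by omega)
    rw [h2]
    congr 1
    omega
  calc (∑ φ : (zmodSubgroupEquiv hp a₂ t : AddSubgroup (ZMod (p^a₂))) →+
      ZMod (p^a₁) ⧸ (zmodSubgroupEquiv hp a₁ s : AddSubgroup (ZMod (p^a₁))),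
        Nat.card ((ZMod (p^a₁) × ZMod (p^a₂)) ⧸
          ggraph (zmodSubgroupEquiv hp a₂ t) (zmodSubgroupEquiv hp a₁ s) φ))
      = ∑ _φ : (zmodSubgroupEquiv hp a₂ t : AddSubgroup (ZMod (p^a₂))) →+
      ZMod (p^a₁) ⧸ (zmodSubgroupEquiv hp a₁ s : AddSubgroup (ZMod (p^a₁))),
          p ^ (a₁ + a₂ - (s : ℕ) - (t : ℕ)) := Finset.sum_congr rfl (fun φ _ => hgq φ)
    _ = p ^ (min (a₁ - (s : ℕ)) (t : ℕ)) * p ^ (a₁ + a₂ - (s : ℕ) - (t : ℕ)) := by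
        rw [Finset.sum_const, smul_eq_mul, Finset.card_univ, ← Nat.card_eq_fintype_card, hhom]
    _ = p ^ (min (a₁ - (s : ℕ)) (t : ℕ) + (a₁ + a₂ - (s : ℕ) - (t : ℕ))) := (pow_add p _ _).symm

end Main

section Algebra
open Finset

/-- The double sum to evaluate. -/
def Fu (p a₁ a₂ : ℕ) : ℕ :=
  ∑ t ∈ Finset.range (a₂ + 1), ∑ u ∈ Finset.range (a₁ + 1), p ^ (a₂ - t + u + min t u)

lemma Fu_zero (p : ℕ) : Fu p 0 0 = 1 := by simp [Fu]

lemma Fu_step (p a₁ a₂ : ℕ) (h : a₁ ≤ a₂ + 1) :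
    Fu p a₁ (a₂ + 1) = p * Fu p a₁ a₂ + ∑ u ∈ Finset.range (a₁ + 1), p ^ (2 * u) := by
  unfold Fu
  rw [Finset.sum_range_succ, Finset.mul_sum]
  congr 1
  · refine Finset.sum_congr rfl (fun t ht => ?_)
    rw [Finset.mem_range] at ht
    rw [Finset.mul_sum]
    refine Finset.sum_congr rfl (fun u hu => ?_)
    have he : a₂ + 1 - t + u + min t u = (a₂ - t + u + min t u) + 1 := by omega
    rw [he, pow_succ, mul_comm]
  · refine Finset.sum_congr rfl (fun u hu => ?_)
    rw [Finset.mem_range] at hu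
    congr 1
    omega

lemma Fu_diag_step (p n : ℕ) :
    Fu p (n + 1) (n + 1) = Fu p n (n + 1) + (n + 2) * p ^ (2 * n + 2) := by
  unfold Fu
  have : ∀ t ∈ Finset.range (n + 2),
      ∑ u ∈ Finset.range (n + 2), p ^ (n + 1 - t + u + min t u)
        = (∑ u ∈ Finset.range (n + 1), p ^ (n + 1 - t + u + min t u)) + p ^ (2 * n + 2) := by
    intro t ht
    rw [Finset.mem_range] at ht
    rw [Finset.sum_range_succ]
    congr 1
    congr 1
    omega
  rw [Finset.sum_congr rfl this, Finset.sum_add_distrib, Finset.sum_const, Finset.card_range,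
    smul_eq_mul]

lemma Fu_diag (p : ℕ) : ∀ n : ℕ, (Fu p n n : ℤ) * (((p : ℤ) - 1) * ((p : ℤ) ^ 2 - 1)) =
    ((n : ℤ) + 1) * (p : ℤ) ^ (n + n + 3) - (n : ℤ) * (p : ℤ) ^ (n + n + 1)
      - (p : ℤ) ^ (2 * n + 2) - (p : ℤ) ^ (n + n + 1) + 1 := by
  intro n
  induction n with
  | zero => rw [Fu_zero]; push_cast; ring
  | succ n ih =>
    have h1 : Fu p (n + 1) (n + 1)
        = p * Fu p n n + (∑ u ∈ Finset.range (n + 1), p ^ (2 * u)) + (n + 2) * p ^ (2 * n + 2) := by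
      rw [Fu_diag_step, Fu_step p n n (by omega)]
    have hc : (Fu p (n + 1) (n + 1) : ℤ)
        = (p : ℤ) * (Fu p n n : ℤ) + (∑ u ∈ Finset.range (n + 1), (p : ℤ) ^ (2 * u))
          + ((n : ℤ) + 2) * (p : ℤ) ^ (2 * n + 2) := by
      exact_mod_cast congrArg (Nat.cast : ℕ → ℤ) h1
    have geom : (∑ u ∈ Finset.range (n + 1), (p : ℤ) ^ (2 * u)) * ((p : ℤ) ^ 2 - 1)
        = (p : ℤ) ^ (2 * (n + 1)) - 1 := by
      have := geom_sum_mul ((p : ℤ) ^ 2) (n + 1)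
      simpa [← pow_mul, mul_comm] using this
    push_cast
    linear_combination (((p : ℤ) - 1) * ((p : ℤ) ^ 2 - 1)) * hc + (p : ℤ) * ih
      + ((p : ℤ) - 1) * geom

lemma Fu_main (p a₁ a₂ : ℕ) (h : a₁ ≤ a₂) :
    (Fu p a₁ a₂ : ℤ) * (((p : ℤ) - 1) * ((p : ℤ) ^ 2 - 1)) =
    ((a₁ : ℤ) + 1) * (p : ℤ) ^ (a₁ + a₂ + 3) - (a₁ : ℤ) * (p : ℤ) ^ (a₁ + a₂ + 1)
      - (p : ℤ) ^ (2 * a₁ + 2) - (p : ℤ) ^ (a₁ + a₂ + 1) + 1 := by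
  induction a₂, h using Nat.le_induction with
  | base => exact Fu_diag p a₁
  | succ m hm ih =>
    have h1 : Fu p a₁ (m + 1)
        = p * Fu p a₁ m + ∑ u ∈ Finset.range (a₁ + 1), p ^ (2 * u) :=
      Fu_step p a₁ m (by omega)
    have hc : (Fu p a₁ (m + 1) : ℤ)
        = (p : ℤ) * (Fu p a₁ m : ℤ) + ∑ u ∈ Finset.range (a₁ + 1), (p : ℤ) ^ (2 * u) := by
      exact_mod_cast congrArg (Nat.cast : ℕ → ℤ) h1
    have geom : (∑ u ∈ Finset.range (a₁ + 1), (p : ℤ) ^ (2 * u)) * ((p : ℤ) ^ 2 - 1)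
        = (p : ℤ) ^ (2 * (a₁ + 1)) - 1 := by
      have := geom_sum_mul ((p : ℤ) ^ 2) (a₁ + 1)
      simpa [← pow_mul, mul_comm] using this
    push_cast
    linear_combination (((p : ℤ) - 1) * ((p : ℤ) ^ 2 - 1)) * hc + (p : ℤ) * ih
      + ((p : ℤ) - 1) * geom

lemma sum_eq_Fu (p a₁ a₂ : ℕ) :
    (∑ t : Fin (a₂ + 1), ∑ s : Fin (a₁ + 1),
        p ^ (min (a₁ - (s : ℕ)) (t : ℕ) + (a₁ + a₂ - (s : ℕ) - (t : ℕ))))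
      = Fu p a₁ a₂ := by
  rw [Fin.sum_univ_eq_sum_range (fun t => ∑ s : Fin (a₁ + 1),
    p ^ (min (a₁ - (s : ℕ)) t + (a₁ + a₂ - (s : ℕ) - t)))]
  refine Finset.sum_congr rfl (fun t ht => ?_)
  rw [Finset.mem_range] at ht
  rw [Fin.sum_univ_eq_sum_range (fun s => p ^ (min (a₁ - s) t + (a₁ + a₂ - s - t)))]
  rw [show (∑ u ∈ Finset.range (a₁ + 1), p ^ (a₂ - t + u + min t u))
    = ∑ u ∈ Finset.range (a₁ + 1), p ^ (a₂ - t + (a₁ + 1 - 1 - u) + min t (a₁ + 1 - 1 - u))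
    from (Finset.sum_range_reflect _ _).symm]
  refine Finset.sum_congr rfl (fun s hs => ?_)
  rw [Finset.mem_range] at hs
  congr 1
  omega

end Algebra

/-- Case 5 (`a₁ + a₂ ≤ b ≤ a₃`) of the rank-3 subgroup counting theorem. -/
theorem rank3_case5 (p a₁ a₂ a₃ b : ℕ) (hp : p.Prime)
    (ha₁ : 1 ≤ a₁) (h12 : a₁ ≤ a₂) (h23 : a₂ ≤ a₃)
    (hb1 : a₁ + a₂ ≤ b) (hb2 : b ≤ a₃) :
    (Nat.card {H : AddSubgroup (ZMod (p ^ a₁) × ZMod (p ^ a₂) × ZMod (p ^ a₃)) //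
        Nat.card H = p ^ b} : ℤ) * (((p : ℤ) - 1) * ((p : ℤ) ^ 2 - 1)) =
      ((a₁ : ℤ) + 1) * (p : ℤ) ^ (a₁ + a₂ + 3) + (p : ℤ) ^ (a₁ + a₂ + 2)
        - (a₁ : ℤ) * (p : ℤ) ^ (a₁ + a₂ + 1) - (p : ℤ) ^ (2 * a₁ + 2)
        - (p : ℤ) ^ (a₁ + a₂ + 2) - (p : ℤ) ^ (a₁ + a₂ + 1) + 1 := by
  classical
  haveI : NeZero (p ^ a₁) := ⟨pow_ne_zero _ hp.pos.ne'⟩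
  haveI : NeZero (p ^ a₂) := ⟨pow_ne_zero _ hp.pos.ne'⟩
  haveI : NeZero (p ^ a₃) := ⟨pow_ne_zero _ hp.pos.ne'⟩
  haveI : Fintype (AddSubgroup (ZMod (p ^ a₁) × ZMod (p ^ a₂))) := Fintype.ofFinite _
  have hN : Nat.card {H : AddSubgroup (ZMod (p ^ a₁) × ZMod (p ^ a₂) × ZMod (p ^ a₃)) //
      Nat.card H = p ^ b} = Fu p a₁ a₂ := by
    rw [card_subgroup_subtype_congr
      (AddEquiv.prodAssoc (M := ZMod (p ^ a₁)) (N := ZMod (p ^ a₂)) (P := ZMod (p ^ a₃))).symm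
      (p ^ b),
      main1 hp a₁ a₂ a₃ b hb1 hb2, main2 hp a₁ a₂, sum_eq_Fu]
  rw [hN, Fu_main p a₁ a₂ h12]
  ring
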